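/- Suppose |V| = |R × S| and the linear map K_1 : ℂ^V → ℂ^{R×S} is invertible, and set C_p = min_{‖η‖_{ℓ^p} = 1} ‖K_1 η‖_{ℓ^p}. If η ∈ ℂ^V satisfies 0 < ‖η‖_{ℓ^p} < (1/μ_p) · C_p/(C_p + ν_p), then Σ_{j=1}^∞ K_j(η, …, η) ≠ 0. -/

import Mathlib

open scoped ENNReal

/-- The ℓ^p norm of a finitely indexed family, `p ∈ [1, ∞]`. -/
noncomputable def lpNorm (p : ℝ≥0∞) {ι E : Type*} [Fintype ι] [SeminormedAddCommGroup E]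
    (f : ι → E) : ℝ :=
  if p = ∞ then ⨆ i, ‖f i‖ else (∑ i, ‖f i‖ ^ p.toReal) ^ (1 / p.toReal)

section helpers
variable {ι : Type*} [Fintype ι] {E F : Type*} [SeminormedAddCommGroup E] [SeminormedAddCommGroup F]

lemma lpNorm_nonneg (p : ℝ≥0∞) (f : ι → E) : 0 ≤ lpNorm p f := by
  unfold lpNorm
  split
  · exact Real.iSup_nonneg fun i => norm_nonneg _
  · exact Real.rpow_nonneg (Finset.sum_nonneg fun i _ => Real.rpow_nonneg (norm_nonneg _) _) _

lemma toReal_pos_of_one_le {p : ℝ≥0∞} (hp : 1 ≤ p) (h : p ≠ ∞) : 0 < p.toReal :=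
  ENNReal.toReal_pos (fun h0 => by simp [h0] at hp) h

lemma lpNorm_congr_norm (p : ℝ≥0∞) {f : ι → E} {g : ι → F} (h : ∀ i, ‖f i‖ = ‖g i‖) :
    lpNorm p f = lpNorm p g := by
  unfold lpNorm; split <;> simp only [h]

lemma lpNorm_le_mul [Nonempty ι] {p : ℝ≥0∞} (hp : 1 ≤ p) {f : ι → E} {g : ι → F} {c : ℝ}
    (hc : 0 ≤ c) (h : ∀ i, ‖f i‖ ≤ c * ‖g i‖) : lpNorm p f ≤ c * lpNorm p g := by
  unfold lpNorm
  split
  · refine ciSup_le fun i => (h i).trans ?_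
    exact mul_le_mul_of_nonneg_left
      (le_ciSup (f := fun i => ‖g i‖) (Set.Finite.bddAbove (Set.finite_range _)) i) hc
  · rename_i htop
    have ht : 0 < p.toReal := toReal_pos_of_one_le hp htop
    have key : ∑ i, ‖f i‖ ^ p.toReal ≤ c ^ p.toReal * ∑ i, ‖g i‖ ^ p.toReal := by
      rw [Finset.mul_sum]
      refine Finset.sum_le_sum fun i _ => ?_
      calc ‖f i‖ ^ p.toReal ≤ (c * ‖g i‖) ^ p.toReal :=
            Real.rpow_le_rpow (norm_nonneg _) (h i) ht.le
        _ = c ^ p.toReal * ‖g i‖ ^ p.toReal := Real.mul_rpow hc (norm_nonneg _)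
    calc (∑ i, ‖f i‖ ^ p.toReal) ^ (1 / p.toReal)
        ≤ (c ^ p.toReal * ∑ i, ‖g i‖ ^ p.toReal) ^ (1 / p.toReal) :=
          Real.rpow_le_rpow (Finset.sum_nonneg fun i _ => Real.rpow_nonneg (norm_nonneg _) _)
            key (by positivity)
      _ = c * (∑ i, ‖g i‖ ^ p.toReal) ^ (1 / p.toReal) := by
          rw [Real.mul_rpow (Real.rpow_nonneg hc _)
            (Finset.sum_nonneg fun i _ => Real.rpow_nonneg (norm_nonneg _) _),
            ← Real.rpow_mul hc, mul_one_div, div_self ht.ne', Real.rpow_one]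

lemma norm_le_lpNorm {q : ℝ≥0∞} (hq : 1 ≤ q) (f : ι → E) (i : ι) : ‖f i‖ ≤ lpNorm q f := by
  unfold lpNorm
  split
  · exact le_ciSup (f := fun j => ‖f j‖) (Set.Finite.bddAbove (Set.finite_range _)) i
  · rename_i htop
    have ht : 0 < q.toReal := toReal_pos_of_one_le hq htop
    calc ‖f i‖ = (‖f i‖ ^ q.toReal) ^ (1 / q.toReal) := by
          rw [← Real.rpow_mul (norm_nonneg _), mul_one_div, div_self ht.ne', Real.rpow_one]
      _ ≤ (∑ j, ‖f j‖ ^ q.toReal) ^ (1 / q.toReal) :=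
          Real.rpow_le_rpow (Real.rpow_nonneg (norm_nonneg _) _)
            (Finset.single_le_sum (fun j _ => Real.rpow_nonneg (norm_nonneg _) _)
              (Finset.mem_univ i)) (by positivity)

end helpers

section hoelder
variable {ι : Type*} [Fintype ι]

lemma lpNorm_inner_le [Nonempty ι] {p q : ℝ≥0∞} (hp : 1 ≤ p) (hq : 1 ≤ q)
    (hpq : 1 / p + 1 / q = 1) (f g : ι → ℝ) (hf : ∀ i, 0 ≤ f i) (hg : ∀ i, 0 ≤ g i) :
    ∑ i, f i * g i ≤ lpNorm q f * lpNorm p g := by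
  have hnf : ∀ i, ‖f i‖ = f i := fun i => Real.norm_of_nonneg (hf i)
  have hng : ∀ i, ‖g i‖ = g i := fun i => Real.norm_of_nonneg (hg i)
  by_cases hqt : q = ∞
  · have hp1 : p = 1 := by
      rw [hqt] at hpq
      simp only [one_div, ENNReal.inv_top, add_zero, ENNReal.inv_eq_one] at hpq
      exact hpq
    subst hp1 hqt
    unfold lpNorm
    simp only [if_pos rfl, if_neg ENNReal.one_ne_top, ENNReal.toReal_one, Real.rpow_one,
      one_div_one, hnf, hng]
    calc ∑ i, f i * g i ≤ ∑ i, (⨆ j, f j) * g i := by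
          refine Finset.sum_le_sum fun i _ => mul_le_mul_of_nonneg_right ?_ (hg i)
          exact le_ciSup (f := fun j => f j) (Set.Finite.bddAbove (Set.finite_range _)) i
      _ = (⨆ j, f j) * ∑ i, g i := by rw [← Finset.mul_sum]
  · by_cases hpt : p = ∞
    · have hq1 : q = 1 := by
        rw [hpt] at hpq
        simp only [one_div, ENNReal.inv_top, zero_add, ENNReal.inv_eq_one] at hpq
        exact hpq
      subst hq1 hpt
      unfold lpNorm
      simp only [if_pos rfl, if_neg ENNReal.one_ne_top, ENNReal.toReal_one, Real.rpow_one,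
        one_div_one, hnf, hng]
      calc ∑ i, f i * g i ≤ ∑ i, f i * ⨆ j, g j := by
            refine Finset.sum_le_sum fun i _ => mul_le_mul_of_nonneg_left ?_ (hf i)
            exact le_ciSup (f := fun j => g j) (Set.Finite.bddAbove (Set.finite_range _)) i
        _ = (∑ i, f i) * ⨆ j, g j := by rw [← Finset.sum_mul]
    · have hp0 : p ≠ 0 := fun h => by simp [h] at hp
      have hq0 : q ≠ 0 := fun h => by simp [h] at hq
      have hq1 : 1 < q := by
        rcases lt_or_eq_of_le hq with h | h
        · exact h
        · exfalso
          rw [← h] at hpq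
          simp only [one_div, inv_one] at hpq
          have : (1/p : ℝ≥0∞) = 0 := by
            refine WithTop.add_right_cancel (ENNReal.one_ne_top) (y := 0) ?_
            change 1 / p + 1 = (0 : ℝ≥0∞) + 1
            rw [zero_add]
            simpa [one_div] using hpq
          rw [one_div, ENNReal.inv_eq_zero] at this
          exact hpt this
      have hcon : Real.HolderConjugate q.toReal p.toReal := by
        constructor
        · have : ((1/q : ℝ≥0∞) + 1/p).toReal = 1 := by
            rw [add_comm] at hpq; rw [hpq]; simp
          rw [ENNReal.toReal_add (by simp [ENNReal.div_eq_top, hq0, hqt])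
            (by simp [ENNReal.div_eq_top, hp0, hpt])] at this
          simpa [one_div, ENNReal.toReal_inv] using this
        · exact toReal_pos_of_one_le hq hqt
        · exact toReal_pos_of_one_le hp hpt
      have := Real.inner_le_Lp_mul_Lq Finset.univ f g hcon
      unfold lpNorm
      rw [if_neg hqt, if_neg hpt]
      simp only [hnf, hng, Real.norm_eq_abs]
      convert this using 4 <;> rw [abs_of_nonneg] <;> first | apply hf | apply hg

lemma lpNorm_prod_le {κ : Type*} [Fintype κ] [Nonempty ι] [Nonempty κ] {p : ℝ≥0∞} (hp : 1 ≤ p)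
    {F : ι × κ → ℂ} {a : ι → ℝ} {b : κ → ℝ} {M : ℝ} (hM : 0 ≤ M) (ha : ∀ r, 0 ≤ a r)
    (hb : ∀ s, 0 ≤ b s) (h : ∀ r s, ‖F (r, s)‖ ≤ M * a r * b s) :
    lpNorm p F ≤ M * lpNorm p a * lpNorm p b := by
  have hna : ∀ r, ‖a r‖ = a r := fun r => Real.norm_of_nonneg (ha r)
  have hnb : ∀ s, ‖b s‖ = b s := fun s => Real.norm_of_nonneg (hb s)
  unfold lpNorm
  split
  · refine ciSup_le fun x => ?_
    have h1 : a x.1 ≤ ⨆ r, ‖a r‖ := by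
      rw [← hna]; exact le_ciSup (f := fun r => ‖a r‖) (Set.Finite.bddAbove (Set.finite_range _)) _
    have h2 : b x.2 ≤ ⨆ s, ‖b s‖ := by
      rw [← hnb]; exact le_ciSup (f := fun s => ‖b s‖) (Set.Finite.bddAbove (Set.finite_range _)) _
    have hsb : (0:ℝ) ≤ ⨆ s, ‖b s‖ := Real.iSup_nonneg fun s => norm_nonneg _
    calc ‖F x‖ ≤ M * a x.1 * b x.2 := by rw [← Prod.mk.eta (p := x)]; exact h x.1 x.2
      _ ≤ M * a x.1 * ⨆ s, ‖b s‖ := by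
          exact mul_le_mul_of_nonneg_left h2 (mul_nonneg hM (ha _))
      _ ≤ M * (⨆ r, ‖a r‖) * ⨆ s, ‖b s‖ := by
          exact mul_le_mul_of_nonneg_right (mul_le_mul_of_nonneg_left h1 hM) hsb
  · rename_i htop
    have ht : 0 < p.toReal := toReal_pos_of_one_le hp htop
    have key : ∑ x : ι × κ, ‖F x‖ ^ p.toReal ≤
        M ^ p.toReal * ((∑ r, ‖a r‖ ^ p.toReal) * ∑ s, ‖b s‖ ^ p.toReal) := by
      have expand : M ^ p.toReal * ((∑ r, ‖a r‖ ^ p.toReal) * ∑ s, ‖b s‖ ^ p.toReal)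
          = ∑ r, ∑ s, M ^ p.toReal * (‖a r‖ ^ p.toReal * ‖b s‖ ^ p.toReal) := by
        rw [Finset.sum_mul_sum, Finset.mul_sum]
        exact Finset.sum_congr rfl fun r _ => by rw [Finset.mul_sum]
      rw [Fintype.sum_prod_type, expand]
      refine Finset.sum_le_sum fun r _ => Finset.sum_le_sum fun s _ => ?_
      calc ‖F (r, s)‖ ^ p.toReal ≤ (M * a r * b s) ^ p.toReal :=
            Real.rpow_le_rpow (norm_nonneg _) (h r s) ht.le
        _ = M ^ p.toReal * (‖a r‖ ^ p.toReal * ‖b s‖ ^ p.toReal) := by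
            rw [Real.mul_rpow (mul_nonneg hM (ha r)) (hb s),
              Real.mul_rpow hM (ha r), hna, hnb]; ring
    have hF0 : (0:ℝ) ≤ ∑ x : ι × κ, ‖F x‖ ^ p.toReal :=
      Finset.sum_nonneg fun x _ => Real.rpow_nonneg (norm_nonneg _) _
    have ha0 : (0:ℝ) ≤ ∑ r, ‖a r‖ ^ p.toReal :=
      Finset.sum_nonneg fun x _ => Real.rpow_nonneg (norm_nonneg _) _
    have hb0 : (0:ℝ) ≤ ∑ s, ‖b s‖ ^ p.toReal :=
      Finset.sum_nonneg fun x _ => Real.rpow_nonneg (norm_nonneg _) _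
    calc (∑ x : ι × κ, ‖F x‖ ^ p.toReal) ^ (1 / p.toReal)
        ≤ (M ^ p.toReal * ((∑ r, ‖a r‖ ^ p.toReal) * ∑ s, ‖b s‖ ^ p.toReal)) ^ (1 / p.toReal) :=
          Real.rpow_le_rpow hF0 key (by positivity)
      _ = M * ((∑ r, ‖a r‖ ^ p.toReal) ^ (1 / p.toReal) * (∑ s, ‖b s‖ ^ p.toReal) ^ (1 / p.toReal)) := by
          rw [Real.mul_rpow (Real.rpow_nonneg hM _) (mul_nonneg ha0 hb0),
            Real.mul_rpow ha0 hb0,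
            ← Real.rpow_mul hM, mul_one_div, div_self ht.ne', Real.rpow_one]
      _ = M * (∑ r, ‖a r‖ ^ p.toReal) ^ (1 / p.toReal) * (∑ s, ‖b s‖ ^ p.toReal) ^ (1 / p.toReal) := by
          ring

end hoelder

variable {V R S : Type*} [Fintype V] [DecidableEq V] [Fintype R] [Fintype S]

/-- The multilinear forward Born operator: `bornK α0 B G C j` is `K_j`, mapping
`(η_1, …, η_j)` (given as the first `j` values of an `ℕ`-indexed family) to
`(r, s) ↦ (−α0)^j (B D_{η_1} G D_{η_2} G ⋯ G D_{η_j} C)(r, s)`; `K_0 := 0` is junk. -/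
noncomputable def bornK (α0 : ℝ) (B : Matrix R V ℂ) (G : Matrix V V ℂ) (C : Matrix V S ℂ) :
    ℕ → (ℕ → V → ℂ) → R × S → ℂ
  | 0, _ => 0
  | j + 1, η => fun rs =>
      (-(α0 : ℂ)) ^ (j + 1) *
        (B * Matrix.diagonal (η 0) *
          (List.ofFn fun i : Fin j => G * Matrix.diagonal (η (i.1 + 1))).prod * C) rs.1 rs.2

/-- `μ_p = α0 · max_{v ∈ V} ‖row v of G‖_{ℓ^q}` (this depends only on `q`). -/
noncomputable def muConst (α0 : ℝ) (q : ℝ≥0∞) (G : Matrix V V ℂ) : ℝ :=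
  α0 * ⨆ v : V, lpNorm q (G v)

/-- `ν_p = α0 · (Σ_{r ∈ R} ‖row r of B‖_q^p)^{1/p} · (Σ_{s ∈ S} ‖column s of C‖_q^p)^{1/p}`,
with maxima replacing sums when `p = ∞`. -/
noncomputable def nuConst (α0 : ℝ) (p q : ℝ≥0∞) (B : Matrix R V ℂ) (C : Matrix V S ℂ) : ℝ :=
  α0 * lpNorm p (fun r : R => lpNorm q (B r)) * lpNorm p (fun s : S => lpNorm q fun v => C v s)

/-- `C_p = min_{‖η‖_p = 1} ‖K_1 η‖_p`. -/
noncomputable def CpConst (p : ℝ≥0∞) (α0 : ℝ) (B : Matrix R V ℂ) (G : Matrix V V ℂ)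
    (C : Matrix V S ℂ) : ℝ :=
  sInf {t : ℝ | ∃ η : V → ℂ, lpNorm p η = 1 ∧ t = lpNorm p (bornK α0 B G C 1 fun _ => η)}

section pilp
variable {ι : Type*} [Fintype ι]

lemma lpNorm_eq_norm (p : ℝ≥0∞) [Fact (1 ≤ p)] (f : ι → ℂ) :
    lpNorm p f = ‖(WithLp.equiv p (ι → ℂ)).symm f‖ := by
  unfold lpNorm
  split
  · rename_i htop
    subst htop
    rw [PiLp.norm_eq_ciSup]
    rfl
  · rename_i htop
    rw [PiLp.norm_eq_sum (toReal_pos_of_one_le (Fact.out : 1 ≤ p) htop)]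
    rfl

end pilp

section matrices
variable {V R S : Type*} [Fintype V] [DecidableEq V] [Fintype R] [Fintype S]

/-- `K_1` as a linear map. -/
noncomputable def K1lin (α0 : ℝ) (B : Matrix R V ℂ) (C : Matrix V S ℂ) :
    (V → ℂ) →ₗ[ℂ] (R × S → ℂ) where
  toFun η := fun rs => -(α0 : ℂ) * (B * Matrix.diagonal η * C) rs.1 rs.2
  map_add' x y := by
    funext rs
    have hD : Matrix.diagonal (x + y) = Matrix.diagonal x + Matrix.diagonal y :=
      (Matrix.diagonal_add x y).symm
    rw [hD, Matrix.mul_add, Matrix.add_mul]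
    simp only [Matrix.add_apply, Pi.add_apply]
    ring
  map_smul' c x := by
    funext rs
    simp only [Matrix.diagonal_smul, Matrix.mul_smul, Matrix.smul_mul, Matrix.smul_apply,
      Pi.smul_apply, RingHom.id_apply, smul_eq_mul]
    ring

lemma bornK_one (α0 : ℝ) (B : Matrix R V ℂ) (G : Matrix V V ℂ) (C : Matrix V S ℂ) (η : V → ℂ) :
    (bornK α0 B G C 1 fun _ => η) = K1lin α0 B C η := by
  funext rs
  simp [bornK, K1lin, List.ofFn_zero, Matrix.mul_one]

lemma bornK_succ (α0 : ℝ) (B : Matrix R V ℂ) (G : Matrix V V ℂ) (C : Matrix V S ℂ) (η : V → ℂ)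
    (j : ℕ) (rs : R × S) :
    bornK α0 B G C (j + 1) (fun _ => η) rs =
      (-(α0 : ℂ)) ^ (j + 1) *
        (B * Matrix.diagonal η * ((G * Matrix.diagonal η) ^ j * C)) rs.1 rs.2 := by
  simp only [bornK, List.ofFn_const, List.prod_replicate, Matrix.mul_assoc]

/-- Entry bound for `(G D)^j C` by induction. -/
lemma entry_bound [Nonempty V] {p q : ℝ≥0∞} (hp : 1 ≤ p) (hq : 1 ≤ q) (hpq : 1 / p + 1 / q = 1)
    (G : Matrix V V ℂ) (C : Matrix V S ℂ) (η : V → ℂ) (j : ℕ) (v : V) (s : S) :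
    ‖((G * Matrix.diagonal η) ^ j * C) v s‖ ≤
      ((⨆ w, lpNorm q (G w)) * lpNorm p η) ^ j * lpNorm q (fun w => C w s) := by
  induction j generalizing v with
  | zero => simpa using norm_le_lpNorm hq (fun w => C w s) v
  | succ j ih =>
    have hGsup : ∀ w, lpNorm q (G w) ≤ ⨆ w, lpNorm q (G w) := fun w =>
      le_ciSup (f := fun w => lpNorm q (G w)) (Set.Finite.bddAbove (Set.finite_range _)) w
    have hGsup0 : (0:ℝ) ≤ ⨆ w, lpNorm q (G w) := Real.iSup_nonneg fun w => lpNorm_nonneg _ _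
    have hb0 : (0:ℝ) ≤ ((⨆ w, lpNorm q (G w)) * lpNorm p η) ^ j * lpNorm q (fun w => C w s) :=
      mul_nonneg (pow_nonneg (mul_nonneg hGsup0 (lpNorm_nonneg _ _)) _) (lpNorm_nonneg _ _)
    have hentry : ((G * Matrix.diagonal η) ^ (j + 1) * C) v s =
        ∑ w, G v w * (η w * ((G * Matrix.diagonal η) ^ j * C) w s) := by
      rw [pow_succ', Matrix.mul_assoc]
      simp only [Matrix.mul_apply (M := G * Matrix.diagonal η)]
      refine Finset.sum_congr rfl fun w _ => ?_
      rw [Matrix.mul_diagonal]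
      ring
    rw [hentry]
    calc ‖∑ w, G v w * (η w * ((G * Matrix.diagonal η) ^ j * C) w s)‖
        ≤ ∑ w, ‖G v w‖ * (‖η w‖ * ‖((G * Matrix.diagonal η) ^ j * C) w s‖) := by
          refine (norm_sum_le _ _).trans (le_of_eq ?_)
          exact Finset.sum_congr rfl fun w _ => by rw [norm_mul, norm_mul]
      _ ≤ lpNorm q (fun w => ‖G v w‖) *
            lpNorm p (fun w => ‖η w‖ * ‖((G * Matrix.diagonal η) ^ j * C) w s‖) := by
          refine lpNorm_inner_le hp hq hpq _ _ (fun w => norm_nonneg _)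
            (fun w => mul_nonneg (norm_nonneg _) (norm_nonneg _))
      _ ≤ (⨆ w, lpNorm q (G w)) *
            ((((⨆ w, lpNorm q (G w)) * lpNorm p η) ^ j * lpNorm q (fun w => C w s)) *
              lpNorm p η) := by
          refine mul_le_mul ?_ ?_ (lpNorm_nonneg _ _) hGsup0
          · rw [lpNorm_congr_norm q (g := G v) (fun w => by rw [norm_norm])]
            exact hGsup v
          · refine lpNorm_le_mul hp hb0 fun w => ?_
            rw [Real.norm_of_nonneg (mul_nonneg (norm_nonneg _) (norm_nonneg _))]
            calc ‖η w‖ * ‖((G * Matrix.diagonal η) ^ j * C) w s‖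
                ≤ ‖η w‖ * (((⨆ w, lpNorm q (G w)) * lpNorm p η) ^ j * lpNorm q (fun w => C w s)) :=
                  mul_le_mul_of_nonneg_left (ih w) (norm_nonneg _)
              _ = _ := by ring
      _ = ((⨆ w, lpNorm q (G w)) * lpNorm p η) ^ (j + 1) * lpNorm q (fun w => C w s) := by ring

end matrices

lemma bornK_lpNorm_le [Nonempty V] [Nonempty R] [Nonempty S] {p q : ℝ≥0∞} (hp : 1 ≤ p)
    (hq : 1 ≤ q) (hpq : 1 / p + 1 / q = 1) {α0 : ℝ} (hα0 : 0 ≤ α0) (B : Matrix R V ℂ)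
    (G : Matrix V V ℂ) (C : Matrix V S ℂ) (η : V → ℂ) (j : ℕ) :
    lpNorm p (bornK α0 B G C (j + 1) fun _ => η) ≤
      nuConst α0 p q B C * (muConst α0 q G * lpNorm p η) ^ j * lpNorm p η := by
  set a : R → ℝ := fun r => lpNorm q (B r) with ha_def
  set b : S → ℝ := fun s => lpNorm q (fun w => C w s) with hb_def
  set Gs : ℝ := ⨆ w, lpNorm q (G w) with hGs_def
  set t : ℝ := lpNorm p η with ht_def
  have ha0 : ∀ r, 0 ≤ a r := fun r => lpNorm_nonneg _ _
  have hb0 : ∀ s, 0 ≤ b s := fun s => lpNorm_nonneg _ _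
  have hGs0 : 0 ≤ Gs := Real.iSup_nonneg fun w => lpNorm_nonneg _ _
  have ht0 : 0 ≤ t := lpNorm_nonneg _ _
  have hM0 : 0 ≤ α0 ^ (j + 1) * (Gs * t) ^ j * t := by positivity
  have key : ∀ r s, ‖bornK α0 B G C (j + 1) (fun _ => η) (r, s)‖ ≤
      (α0 ^ (j + 1) * (Gs * t) ^ j * t) * a r * b s := by
    intro r s
    rw [bornK_succ]
    set P : Matrix V S ℂ := (G * Matrix.diagonal η) ^ j * C with hP_def
    have hentry : (B * Matrix.diagonal η * P) r s = ∑ v, B r v * (η v * P v s) := by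
      rw [Matrix.mul_assoc]
      rw [Matrix.mul_apply (M := B) (N := Matrix.diagonal η * P)]
      refine Finset.sum_congr rfl fun v _ => ?_
      rw [Matrix.mul_apply (M := Matrix.diagonal η) (N := P)]
      rw [Finset.sum_eq_single v (fun u _ hu => by
        simp [Matrix.diagonal_apply_ne _ (Ne.symm hu)]) (by simp)]
      simp [Matrix.diagonal_apply_eq]
    have hnorm : ‖(-(α0 : ℂ)) ^ (j + 1) * (B * Matrix.diagonal η * P) r s‖ =
        α0 ^ (j + 1) * ‖(B * Matrix.diagonal η * P) r s‖ := by
      rw [norm_mul, norm_pow, norm_neg, Complex.norm_real, Real.norm_of_nonneg hα0]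
    rw [hnorm, hentry]
    have hsum : ‖∑ v, B r v * (η v * P v s)‖ ≤ a r * ((Gs * t) ^ j * b s * t) := by
      calc ‖∑ v, B r v * (η v * P v s)‖ ≤ ∑ v, ‖B r v‖ * (‖η v‖ * ‖P v s‖) := by
            refine (norm_sum_le _ _).trans (le_of_eq ?_)
            exact Finset.sum_congr rfl fun v _ => by rw [norm_mul, norm_mul]
        _ ≤ lpNorm q (fun v => ‖B r v‖) * lpNorm p (fun v => ‖η v‖ * ‖P v s‖) :=
            lpNorm_inner_le hp hq hpq _ _ (fun v => norm_nonneg _)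
              (fun v => mul_nonneg (norm_nonneg _) (norm_nonneg _))
        _ ≤ a r * ((Gs * t) ^ j * b s * t) := by
            refine mul_le_mul (le_of_eq ?_) ?_ (lpNorm_nonneg _ _) (ha0 r)
            · exact lpNorm_congr_norm q fun v => norm_norm _
            · have hc0 : (0:ℝ) ≤ (Gs * t) ^ j * b s := mul_nonneg (pow_nonneg (mul_nonneg hGs0 ht0) _) (hb0 s)
              refine (lpNorm_le_mul hp hc0 fun v => ?_).trans (le_of_eq (by ring))
              rw [Real.norm_of_nonneg (mul_nonneg (norm_nonneg _) (norm_nonneg _))]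
              have := entry_bound hp hq hpq G C η j v s
              calc ‖η v‖ * ‖P v s‖ ≤ ‖η v‖ * ((Gs * t) ^ j * b s) :=
                    mul_le_mul_of_nonneg_left this (norm_nonneg _)
                _ = (Gs * t) ^ j * b s * ‖η v‖ := by ring
    calc α0 ^ (j + 1) * ‖∑ v, B r v * (η v * P v s)‖
        ≤ α0 ^ (j + 1) * (a r * ((Gs * t) ^ j * b s * t)) :=
          mul_le_mul_of_nonneg_left hsum (by positivity)
      _ = (α0 ^ (j + 1) * (Gs * t) ^ j * t) * a r * b s := by ring
  have := lpNorm_prod_le hp hM0 ha0 hb0 key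
  refine this.trans (le_of_eq ?_)
  have hna : lpNorm p (fun r => ‖a r‖) = lpNorm p a := lpNorm_congr_norm p fun r => norm_norm _
  rw [nuConst, muConst]
  ring

/- STATEMENT 6: If `|V| = |R × S|`, `K_1` is invertible, and
`0 < ‖η‖_p < (1/μ_p)·C_p/(C_p + ν_p)`, then `Σ_{j=1}^∞ K_j(η, …, η) ≠ 0`. -/
set_option maxHeartbeats 1600000 in
theorem forward_born_sum_ne_zero [Nonempty V] [Nonempty R] [Nonempty S]
    (p q : ℝ≥0∞) (hp : 1 ≤ p) (hq : 1 ≤ q) (hpq : 1 / p + 1 / q = 1)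
    (α0 : ℝ) (hα0 : 0 < α0) (B : Matrix R V ℂ) (G : Matrix V V ℂ) (C : Matrix V S ℂ)
    (hcard : Fintype.card V = Fintype.card (R × S))
    (hinv : Function.Bijective fun η : V → ℂ => bornK α0 B G C 1 fun _ => η)
    (η : V → ℂ) (hη0 : 0 < lpNorm p η)
    (hη : lpNorm p η <
      1 / muConst α0 q G * (CpConst p α0 B G C / (CpConst p α0 B G C + nuConst α0 p q B C))) :
    (∑' j : ℕ, bornK α0 B G C (j + 1) fun _ => η) ≠ 0 := by
  haveI : Fact (1 ≤ p) := ⟨hp⟩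
  set t : ℝ := lpNorm p η with ht_def
  set μ : ℝ := muConst α0 q G with hμ_def
  set ν : ℝ := nuConst α0 p q B C with hν_def
  set Cp : ℝ := CpConst p α0 B G C with hCp_def
  have hν0 : 0 ≤ ν := by
    rw [hν_def, nuConst]
    exact mul_nonneg (mul_nonneg hα0.le (lpNorm_nonneg _ _)) (lpNorm_nonneg _ _)
  have hμ0 : 0 ≤ μ := by
    rw [hμ_def, muConst]
    exact mul_nonneg hα0.le (Real.iSup_nonneg fun w => lpNorm_nonneg _ _)
  have hμpos : 0 < μ := by
    rcases hμ0.lt_or_eq with h | h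
    · exact h
    · exfalso; rw [← h] at hη; simp at hη; linarith
  -- Set up the PiLp spaces
  set E := PiLp p (fun _ : V => ℂ) with hE_def
  set F' := PiLp p (fun _ : R × S => ℂ) with hF_def
  haveI : FiniteDimensional ℂ E :=
    LinearEquiv.finiteDimensional (WithLp.linearEquiv p ℂ (V → ℂ)).symm
  haveI : FiniteDimensional ℂ F' :=
    LinearEquiv.finiteDimensional (WithLp.linearEquiv p ℂ (R × S → ℂ)).symm
  haveI : ProperSpace E := FiniteDimensional.proper ℂ E
  haveI : CompleteSpace F' := FiniteDimensional.complete ℂ F'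
  haveI : Nontrivial E := (WithLp.equiv p (V → ℂ)).nontrivial
  set Llin : E →ₗ[ℂ] F' :=
    ((WithLp.linearEquiv p ℂ (R × S → ℂ)).symm.toLinearMap.comp
      ((K1lin α0 B C).comp (WithLp.linearEquiv p ℂ (V → ℂ)).toLinearMap)) with hLlin_def
  set L : E →L[ℂ] F' := LinearMap.toContinuousLinearMap Llin with hL_def
  have hLapp : ∀ x : E, L x = (WithLp.equiv p (R × S → ℂ)).symm
      (K1lin α0 B C ((WithLp.equiv p (V → ℂ)) x)) := fun x => rfl
  -- K1 injective
  have hK1eq : (fun η : V → ℂ => bornK α0 B G C 1 fun _ => η) =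
      fun η' : V → ℂ => K1lin α0 B C η' := funext fun η' => bornK_one α0 B G C η'
  have hK1inj : Function.Injective (K1lin α0 B C) := by
    have := hinv.injective
    rwa [hK1eq] at this
  have hLinj : Function.Injective L := by
    intro x y hxy
    rw [hLapp, hLapp] at hxy
    have h1 := (WithLp.equiv p (R × S → ℂ)).symm.injective hxy
    have h2 := hK1inj h1
    exact (WithLp.equiv p (V → ℂ)).injective h2
  -- the set defining CpConst
  set Tset : Set ℝ := {c : ℝ | ∃ η' : V → ℂ, lpNorm p η' = 1 ∧
    c = lpNorm p (bornK α0 B G C 1 fun _ => η')} with hTset_def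
  have hTset : Tset = (fun x : E => ‖L x‖) '' Metric.sphere 0 1 := by
    ext c
    simp only [hTset_def, Set.mem_setOf_eq, Set.mem_image, mem_sphere_zero_iff_norm]
    constructor
    · rintro ⟨η', h1, h2⟩
      refine ⟨(WithLp.equiv p (V → ℂ)).symm η', ?_, ?_⟩
      · rw [← lpNorm_eq_norm]; exact h1
      · rw [h2, bornK_one, hLapp, ← lpNorm_eq_norm]
        congr 1
    · rintro ⟨x, hx, rfl⟩
      refine ⟨(WithLp.equiv p (V → ℂ)) x, ?_, ?_⟩
      · rw [lpNorm_eq_norm, Equiv.symm_apply_apply]; exact hx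
      · rw [bornK_one, hLapp, ← lpNorm_eq_norm]
  have hbdd : BddBelow Tset := by
    refine ⟨0, fun c hc => ?_⟩
    rw [hTset] at hc
    obtain ⟨x, _, rfl⟩ := hc
    exact norm_nonneg _
  have hCmem : Cp ∈ Tset := by
    rw [hCp_def, CpConst, ← hTset_def, hTset]
    refine IsCompact.sInf_mem ?_ ?_
    · exact (isCompact_sphere 0 1).image (L.continuous.norm)
    · exact (NormedSpace.sphere_nonempty.mpr zero_le_one).image _
  have hCpos : 0 < Cp := by
    rw [hTset] at hCmem
    obtain ⟨x, hx, hCx⟩ := hCmem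
    rw [mem_sphere_zero_iff_norm] at hx
    rw [← hCx]
    refine norm_pos_iff.mpr fun hL0 => ?_
    have : x = 0 := hLinj (by rw [hL0, map_zero])
    rw [this, norm_zero] at hx
    exact one_ne_zero hx.symm
  have hlow : ∀ x : E, Cp * ‖x‖ ≤ ‖L x‖ := by
    intro x
    rcases eq_or_ne x 0 with rfl | hx
    · simp
    · have hxn : (0:ℝ) < ‖x‖ := norm_pos_iff.mpr hx
      have hmem : ‖L ((‖x‖⁻¹ : ℂ) • x)‖ ∈ Tset := by
        rw [hTset]
        refine ⟨(‖x‖⁻¹ : ℂ) • x, ?_, rfl⟩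
        rw [mem_sphere_zero_iff_norm, norm_smul]
        simp [hxn.le, inv_mul_cancel₀ hxn.ne']
      have h1 : Cp ≤ ‖L ((‖x‖⁻¹ : ℂ) • x)‖ := by
        rw [hCp_def, CpConst, ← hTset_def]
        exact csInf_le hbdd hmem
      rw [map_smul, norm_smul] at h1
      simp only [norm_inv, Complex.norm_real, Real.norm_of_nonneg (norm_nonneg x)] at h1
      rw [mul_comm]
      calc ‖x‖ * Cp ≤ ‖x‖ * (‖x‖⁻¹ * ‖L x‖) := mul_le_mul_of_nonneg_left h1 hxn.le
        _ = ‖L x‖ := by field_simp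
  -- the series
  set g : ℕ → (R × S → ℂ) := (fun j => bornK α0 B G C (j + 1) fun _ => η) with hg_def
  set gF : ℕ → F' := fun j => (WithLp.equiv p (R × S → ℂ)).symm (g j) with hgF_def
  have hnormgF : ∀ j, ‖gF j‖ = lpNorm p (g j) := fun j => (lpNorm_eq_norm p (g j)).symm
  set r : ℝ := μ * t with hr_def
  have hr0 : 0 ≤ r := mul_nonneg hμ0 (lpNorm_nonneg _ _)
  have hfrac : r < Cp / (Cp + ν) := by
    rw [hr_def, mul_comm]
    rw [one_div, inv_mul_eq_div, lt_div_iff₀ hμpos] at hη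
    exact hη
  have hCν : 0 < Cp + ν := by linarith
  have hr1 : r < 1 := hfrac.trans_le ((div_le_one hCν).mpr (by linarith))
  have hboundgF : ∀ j, ‖gF j‖ ≤ ν * t * r ^ j := by
    intro j
    rw [hnormgF]
    refine (bornK_lpNorm_le hp hq hpq hα0.le B G C η j).trans (le_of_eq ?_)
    rw [← hμ_def, ← hν_def, ← ht_def, ← hr_def]
    ring
  have hgeo : Summable (fun j : ℕ => ν * t * r ^ j) :=
    (summable_geometric_of_lt_one hr0 hr1).mul_left _
  have hsumnorm : Summable (fun j => ‖gF j‖) :=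
    Summable.of_nonneg_of_le (fun j => norm_nonneg _) hboundgF hgeo
  have hsumgF : Summable gF := hsumnorm.of_norm
  intro hzero
  -- transfer the tsum
  have hmap : HasSum g ((WithLp.equiv p (R × S → ℂ)) (∑' j, gF j)) := by
    have := hsumgF.hasSum.mapL
      (↑(PiLp.continuousLinearEquiv p ℂ (fun _ : R × S => ℂ)) : F' →L[ℂ] (R × S → ℂ))
    convert this using 2
    rfl
    rfl
  have hS0 : (∑' j, gF j) = 0 := by
    have h1 : (WithLp.equiv p (R × S → ℂ)) (∑' j, gF j) = 0 := by
      rw [← hmap.tsum_eq]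
      exact hzero
    have h2 := congrArg (WithLp.equiv p (R × S → ℂ)).symm h1
    rw [Equiv.symm_apply_apply] at h2
    exact h2.trans rfl
  rw [hsumgF.tsum_eq_zero_add] at hS0
  have hgF0 : gF 0 = -∑' j, gF (j + 1) := by
    have := eq_neg_of_add_eq_zero_left hS0
    exact this
  have htail_norm : Summable (fun j => ‖gF (j + 1)‖) := by
    exact (summable_nat_add_iff 1).mpr hsumnorm
  have htail : ‖gF 0‖ ≤ ∑' j, ‖gF (j + 1)‖ := by
    rw [hgF0, norm_neg]
    exact norm_tsum_le_tsum_norm htail_norm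
  have htail2 : (∑' j, ‖gF (j + 1)‖) ≤ ν * t * r * (1 - r)⁻¹ := by
    have hle : (∑' j, ‖gF (j + 1)‖) ≤ ∑' j : ℕ, (ν * t * r) * r ^ j := by
      refine Summable.tsum_le_tsum (fun j => ?_) htail_norm ?_
      · refine (hboundgF (j + 1)).trans (le_of_eq ?_)
        rw [pow_succ]
        ring
      · exact (summable_geometric_of_lt_one hr0 hr1).mul_left _
    rw [tsum_mul_left, tsum_geometric_of_lt_one hr0 hr1] at hle
    exact hle
  -- lower bound for the first term
  have hfirst : Cp * t ≤ ‖gF 0‖ := by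
    have hx : ‖(WithLp.equiv p (V → ℂ)).symm η‖ = t := (lpNorm_eq_norm p η).symm
    have hgF0eq : gF 0 = L ((WithLp.equiv p (V → ℂ)).symm η) := by
      rw [hgF_def, hLapp, Equiv.apply_symm_apply, hg_def]
      simp only
      rw [bornK_one]
    rw [hgF0eq, ← hx]
    exact hlow _
  -- final contradiction
  have hs : 0 < 1 - r := by linarith
  have hkey : ν * t * r * (1 - r)⁻¹ < Cp * t := by
    rw [← div_eq_mul_inv, div_lt_iff₀ hs]
    have h1 : r * (Cp + ν) < Cp := (lt_div_iff₀ hCν).mp hfrac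
    have h2 := mul_lt_mul_of_pos_left h1 hη0
    nlinarith
  have := hfirst.trans (htail.trans htail2)
  linarith
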